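/- arXiv:1603.03059 — 2 statements merged into one kernel-verified Lean document; each statement's English description precedes it below -/
import Mathlib

section
/- Let t be a good ω-word over S = {1,2,3} of the form t = b₀·b₁·b₂·⋯ where b₀ = 1213 and each bᵢ ∈ {12, 123, 1232, 13, 1323} for i ≥ 1. If b_{i+1} = 13 for some i ≥ 1, then bᵢ = 12. -/
/-!
Alphabet encodings:
* `S = {1,2,3}` is `Fin 3` with `1 ↦ 0`, `2 ↦ 1`, `3 ↦ 2` (so `1 < 2 < 3` matches `0 < 1 < 2`).
* `T = {a,b,c,d}` is `Fin 4` with `a ↦ 0`, `b ↦ 1`, `c ↦ 2`, `d ↦ 3`.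
* `U = {a,c,d}` is `Fin 3` with `a ↦ 0`, `c ↦ 1`, `d ↦ 2` (so `a < c < d` matches `0 < 1 < 2`).
-/

/-- The six forbidden factors `1231321, 1321231, 2132312, 2312132, 3123213, 3213123`
(images of the letter pattern `xyzxzyx`). -/
def Forbidden : List (List (Fin 3)) :=
  [[0,1,2,0,2,1,0], [0,2,1,0,1,2,0], [1,0,2,1,2,0,1],
   [1,2,0,1,0,2,1], [2,0,1,2,1,0,2], [2,1,0,2,0,1,2]]

/-- A finite word is square-free if it has no nonempty factor `x ++ x`. -/
def SquareFreeL {α : Type*} (w : List α) : Prop :=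
  ∀ x : List α, x ≠ [] → ¬ (x ++ x) <:+: w

/-- A finite word over `S` is factor-good if no forbidden factor occurs in it. -/
def FactorGoodL (w : List (Fin 3)) : Prop :=
  ∀ p ∈ Forbidden, ¬ p <:+: w

/-- A finite word over `S` is good if it is square-free and factor-good. -/
def GoodL (w : List (Fin 3)) : Prop := SquareFreeL w ∧ FactorGoodL w

/-- The factor of an ω-word `w` starting at position `i`, of length `n`. -/
def factorAtN {α : Type*} (w : ℕ → α) (i n : ℕ) : List α :=
  (List.range n).map fun k => w (i + k)

/-- `l` is a (finite) factor of the ω-word `w`. -/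
def IsFactorN {α : Type*} (l : List α) (w : ℕ → α) : Prop :=
  ∃ i : ℕ, l = factorAtN w i l.length

/-- An ω-word is square-free if no nonempty `x ++ x` is a factor of it. -/
def SquareFreeN {α : Type*} (w : ℕ → α) : Prop :=
  ∀ x : List α, x ≠ [] → ¬ IsFactorN (x ++ x) w

/-- An ω-word over `S` is factor-good if no forbidden factor occurs in it. -/
def FactorGoodN (w : ℕ → Fin 3) : Prop :=
  ∀ p ∈ Forbidden, ¬ IsFactorN p w

/-- An ω-word over `S` is good if it is square-free and factor-good. -/
def GoodN (w : ℕ → Fin 3) : Prop := SquareFreeN w ∧ FactorGoodN w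

/-- The factor of a ℤ-word `w` starting at position `i`, of length `n`. -/
def factorAtZ {α : Type*} (w : ℤ → α) (i : ℤ) (n : ℕ) : List α :=
  (List.range n).map fun k => w (i + k)

/-- `l` is a (finite) factor of the ℤ-word `w`. -/
def IsFactorZ {α : Type*} (l : List α) (w : ℤ → α) : Prop :=
  ∃ i : ℤ, l = factorAtZ w i l.length

/-- A ℤ-word is square-free if no nonempty `x ++ x` is a factor of it. -/
def SquareFreeZ {α : Type*} (w : ℤ → α) : Prop :=
  ∀ x : List α, x ≠ [] → ¬ IsFactorZ (x ++ x) w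

/-- A ℤ-word over `S` is factor-good if no forbidden factor occurs in it. -/
def FactorGoodZ (w : ℤ → Fin 3) : Prop :=
  ∀ p ∈ Forbidden, ¬ IsFactorZ p w

/-- A ℤ-word over `S` is good if it is square-free and factor-good. -/
def GoodZ (w : ℤ → Fin 3) : Prop := SquareFreeZ w ∧ FactorGoodZ w

/-- The ω-word `w` is the infinite concatenation `blocks 0 · blocks 1 · blocks 2 ⋯`. -/
def NConcat {α : Type*} (w : ℕ → α) (blocks : ℕ → List α) : Prop :=
  ∃ p : ℕ → ℕ, p 0 = 0 ∧ (∀ i, p (i + 1) = p i + (blocks i).length) ∧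
    ∀ i, blocks i = factorAtN w (p i) (blocks i).length

/-- The ℤ-word `w` is the bi-infinite concatenation `⋯ blocks (-1) · blocks 0 · blocks 1 ⋯`
(up to a shift of indexing). -/
def ZConcat {α : Type*} (w : ℤ → α) (blocks : ℤ → List α) : Prop :=
  ∃ p : ℤ → ℤ, (∀ i, p (i + 1) = p i + (blocks i).length) ∧
    ∀ i, blocks i = factorAtZ w (p i) (blocks i).length

/-- The morphism `f : T* → S*` on letters:
`f(a) = 1213`, `f(b) = 123`, `f(c) = 1323`, `f(d) = 1232`. -/
def fL : Fin 4 → List (Fin 3) := ![[0,1,0,2], [0,1,2], [0,2,1,2], [0,1,2,1]]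

/-- The morphism `f : T* → S*` on finite words. -/
def fW (v : List (Fin 4)) : List (Fin 3) := (v.map fL).flatten

/-- The inclusion `U → T`: `a ↦ a`, `c ↦ c`, `d ↦ d`. -/
def uT : Fin 3 → Fin 4 := ![0, 2, 3]

/-- Does `g` insert the letter `b` between `x` and `y`?  True exactly for the
pairs `ac`, `da`, `dc`. -/
def needB (x y : Fin 3) : Bool :=
  (x == 0 && y == 1) || (x == 2 && y == 0) || (x == 2 && y == 1)

/-- The map `g : U* → T*`, replacing each factor `ac` by `abc`, `da` by `dba`
and `dc` by `dbc`. -/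
def gW : List (Fin 3) → List (Fin 4)
  | [] => []
  | [x] => [uT x]
  | x :: y :: r => (uT x :: (if needB x y then [(1 : Fin 4)] else [])) ++ gW (y :: r)

/-- The block of `f(g(u))` contributed by position `i` of the ω-word `u` over `U`:
the `f`-image of `u i`, followed by `f(b) = 123` when `g` inserts a `b` after `u i`. -/
def fgBlockN (u : ℕ → Fin 3) (i : ℕ) : List (Fin 3) :=
  fL (uT (u i)) ++ (if needB (u i) (u (i + 1)) then fL 1 else [])

/-- The block of `f(g(u))` contributed by position `i` of the ℤ-word `u` over `U`. -/
def fgBlockZ (u : ℤ → Fin 3) (i : ℤ) : List (Fin 3) :=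
  fL (uT (u i)) ++ (if needB (u i) (u (i + 1)) then fL 1 else [])

/-- The letter permutation `π` of `S`: fixes `1`, interchanges `2` and `3`. -/
def pi3 : Fin 3 → Fin 3 := ![0, 2, 1]

/-- Lexicographic order on ω-words: `v ≤ w` iff `v = w` or at the first index
where they differ the letter of `v` is smaller. -/
def LexLeN {α : Type*} [LinearOrder α] (v w : ℕ → α) : Prop :=
  v = w ∨ ∃ n : ℕ, (∀ k < n, v k = w k) ∧ v n < w n


lemma factorAtN_append {α : Type*} (w : ℕ → α) (i m n : ℕ) :
    factorAtN w i (m + n) = factorAtN w i m ++ factorAtN w (i + m) n := by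
  simp only [factorAtN, List.range_add, List.map_append, List.map_map]
  congr 1
  ext k
  simp [Function.comp, add_assoc]

lemma factor_of_infix {α : Type*} {u : ℕ → α} {l : List α} {j n : ℕ}
    (h : l <:+: factorAtN u j n) : IsFactorN l u := by
  obtain ⟨s, r, hsr⟩ := h
  have hlen : s.length + l.length + r.length = n := by
    have h0 := congrArg List.length hsr; simp [factorAtN] at h0; omega
  refine ⟨j + s.length, ?_⟩
  have e1 : factorAtN u j n
      = factorAtN u j s.length ++ (factorAtN u (j + s.length) l.length
        ++ factorAtN u (j + s.length + l.length) r.length) := by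
    rw [← factorAtN_append, ← factorAtN_append]
    congr 1; omega
  rw [e1, List.append_assoc] at hsr
  obtain ⟨-, h2⟩ := List.append_inj hsr (by simp [factorAtN])
  exact (List.append_inj h2 (by simp [factorAtN])).1

/-- Boolean check: `w` contains a square or a forbidden factor. -/
def badCheck (w : List (Fin 3)) : Bool :=
  ((List.range (w.length + 1)).any fun s => (List.range (w.length + 1)).any fun L =>
    !((w.drop s).take L == []) && ((w.drop s).take (2*L) == (w.drop s).take L ++ (w.drop s).take L))
  || Forbidden.any fun q => decide (q <:+: w)

lemma leaf {t : ℕ → Fin 3} (hg : GoodN t) (W : List (Fin 3)) {j n : ℕ}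
    (hW : W = factorAtN t j n) (h : badCheck W = true) : False := by
  obtain ⟨hsf, hfg⟩ := hg
  rw [badCheck, Bool.or_eq_true, List.any_eq_true] at h
  rcases h with ⟨s, -, h⟩ | h
  · rw [List.any_eq_true] at h
    obtain ⟨L, -, h⟩ := h
    rw [Bool.and_eq_true, Bool.not_eq_true', beq_eq_false_iff_ne, beq_iff_eq] at h
    obtain ⟨hne, heq⟩ := h
    set x := (W.drop s).take L with hx
    have hinf : x ++ x <:+: W := by
      rw [← heq]
      exact ((W.drop s).take_prefix (2*L)).isInfix.trans (W.drop_suffix s).isInfix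
    rw [hW] at hinf
    exact hsf _ hne (factor_of_infix hinf)
  · rw [List.any_eq_true] at h
    obtain ⟨q, hq, h⟩ := h
    rw [decide_eq_true_iff] at h
    rw [hW] at h
    exact hfg q hq (factor_of_infix h)

/-- For a good ω-word `t = b₀·b₁·b₂⋯` with `b₀ = 1213` and each
`bᵢ ∈ {12,123,1232,13,1323}` for `i ≥ 1`: if `b_{i+1} = 13` for some `i ≥ 1`,
then `bᵢ = 12`. -/
theorem stmt_12 (b : ℕ → List (Fin 3)) (hb0 : b 0 = [0,1,0,2])
    (hb : ∀ i, 1 ≤ i → b i ∈ [[0,1], [0,1,2], [0,1,2,1], [0,2], [0,2,1,2]])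
    (t : ℕ → Fin 3) (ht : NConcat t b) (hg : GoodN t)
    (i : ℕ) (hi : 1 ≤ i) (h13 : b (i + 1) = [0,2]) :
    b i = [0,1] := by
  
  obtain ⟨p, hp0, hp1, hp2⟩ := ht
  have hpe : p i = p (i-1) + (b (i-1)).length := by
    have h := hp1 (i-1)
    rw [show i - 1 + 1 = i from by omega] at h
    exact h
  have hlen1 : 1 ≤ (b (i-1)).length := by
    rcases Nat.lt_or_ge (i-1) 1 with h|h
    · rw [show i - 1 = 0 from by omega, hb0]; decide
    · have hm := hb (i-1) h
      simp only [List.mem_cons, List.not_mem_nil, or_false] at hm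
      rcases hm with hm|hm|hm|hm|hm <;> rw [hm] <;> decide
  have hpi1 : 1 ≤ p i := by omega
  have base : ∀ nn, factorAtN t (p i - 1) (1 + nn) = t (p i - 1) :: factorAtN t (p i) nn := by
    intro nn
    rw [factorAtN_append, show p i - 1 + 1 = p i from by omega]
    rfl
  have key : ∀ j nn, factorAtN t (p j) ((b j).length + nn) = b j ++ factorAtN t (p (j+1)) nn := by
    intro j nn
    rw [factorAtN_append, ← hp2 j, ← hp1 j]
  have hlast : t (p i - 1) = 1 ∨ t (p i - 1) = 2 := by
    rcases Nat.lt_or_ge (i-1) 1 with h|h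
    · have hprev : b (i-1) = [0,1,0,2] := by
        rw [show i - 1 = 0 from by omega]; exact hb0
      have hfe := hp2 (i-1)
      rw [hprev] at hfe
      have h2 : t (p (i-1) + 3) = 2 := by
        have h3 := congrArg (fun l => l[3]?) hfe
        simpa [factorAtN] using h3.symm
      have h5 : (b (i-1)).length = 4 := by rw [hprev]; rfl
      have h4 : p i - 1 = p (i-1) + 3 := by omega
      exact Or.inr (by rw [h4]; exact h2)
    · have hm := hb (i-1) h
      simp only [List.mem_cons, List.not_mem_nil, or_false] at hm
      rcases hm with hprev|hprev|hprev|hprev|hprev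
      · -- [0,1]
        have hfe := hp2 (i-1)
        rw [hprev] at hfe
        have h2 : t (p (i-1) + 1) = 1 := by
          have h3 := congrArg (fun l => l[1]?) hfe
          simpa [factorAtN] using h3.symm
        have h5 : (b (i-1)).length = 2 := by rw [hprev]; rfl
        have h4 : p i - 1 = p (i-1) + 1 := by omega
        exact Or.inl (by rw [h4]; exact h2)
      · -- [0,1,2]
        have hfe := hp2 (i-1)
        rw [hprev] at hfe
        have h2 : t (p (i-1) + 2) = 2 := by
          have h3 := congrArg (fun l => l[2]?) hfe
          simpa [factorAtN] using h3.symm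
        have h5 : (b (i-1)).length = 3 := by rw [hprev]; rfl
        have h4 : p i - 1 = p (i-1) + 2 := by omega
        exact Or.inr (by rw [h4]; exact h2)
      · -- [0,1,2,1]
        have hfe := hp2 (i-1)
        rw [hprev] at hfe
        have h2 : t (p (i-1) + 3) = 1 := by
          have h3 := congrArg (fun l => l[3]?) hfe
          simpa [factorAtN] using h3.symm
        have h5 : (b (i-1)).length = 4 := by rw [hprev]; rfl
        have h4 : p i - 1 = p (i-1) + 3 := by omega
        exact Or.inl (by rw [h4]; exact h2)
      · -- [0,2]
        have hfe := hp2 (i-1)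
        rw [hprev] at hfe
        have h2 : t (p (i-1) + 1) = 2 := by
          have h3 := congrArg (fun l => l[1]?) hfe
          simpa [factorAtN] using h3.symm
        have h5 : (b (i-1)).length = 2 := by rw [hprev]; rfl
        have h4 : p i - 1 = p (i-1) + 1 := by omega
        exact Or.inr (by rw [h4]; exact h2)
      · -- [0,2,1,2]
        have hfe := hp2 (i-1)
        rw [hprev] at hfe
        have h2 : t (p (i-1) + 3) = 2 := by
          have h3 := congrArg (fun l => l[3]?) hfe
          simpa [factorAtN] using h3.symm
        have h5 : (b (i-1)).length = 4 := by rw [hprev]; rfl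
        have h4 : p i - 1 = p (i-1) + 3 := by omega
        exact Or.inr (by rw [h4]; exact h2)
  have hbim := hb i hi
  simp only [List.mem_cons, List.not_mem_nil, or_false] at hbim
  rcases hbim with hbi|hbi|hbi|hbi|hbi
  · exact hbi
  · -- b i = 123
    rcases hlast with hc|hc
    · -- last letter 2
      have hm2 := hb (i+1+1) (by omega)
      simp only [List.mem_cons, List.not_mem_nil, or_false] at hm2
      rcases hm2 with hx2|hx2|hx2|hx2|hx2
      · -- 12
        have e : factorAtN t (p i - 1) (1 + ((b (i)).length + ((b (i+1)).length + ((b (i+1+1)).length)))) = t (p i - 1) :: (b (i) ++ (b (i+1) ++ (b (i+1+1)))) := by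
          rw [base, key, key, ← hp2]
        rw [hc, hbi, h13, hx2] at e
        exact (leaf hg _ e.symm (by decide)).elim
      · -- 123
        have e : factorAtN t (p i - 1) (1 + ((b (i)).length + ((b (i+1)).length + ((b (i+1+1)).length)))) = t (p i - 1) :: (b (i) ++ (b (i+1) ++ (b (i+1+1)))) := by
          rw [base, key, key, ← hp2]
        rw [hc, hbi, h13, hx2] at e
        exact (leaf hg _ e.symm (by decide)).elim
      · -- 1232
        have e : factorAtN t (p i - 1) (1 + ((b (i)).length + ((b (i+1)).length + ((b (i+1+1)).length)))) = t (p i - 1) :: (b (i) ++ (b (i+1) ++ (b (i+1+1)))) := by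
          rw [base, key, key, ← hp2]
        rw [hc, hbi, h13, hx2] at e
        exact (leaf hg _ e.symm (by decide)).elim
      · -- 13
        have e : factorAtN t (p i - 1) (1 + ((b (i)).length + ((b (i+1)).length + ((b (i+1+1)).length)))) = t (p i - 1) :: (b (i) ++ (b (i+1) ++ (b (i+1+1)))) := by
          rw [base, key, key, ← hp2]
        rw [hc, hbi, h13, hx2] at e
        exact (leaf hg _ e.symm (by decide)).elim
      · -- 1323
        have e : factorAtN t (p i - 1) (1 + ((b (i)).length + ((b (i+1)).length + ((b (i+1+1)).length)))) = t (p i - 1) :: (b (i) ++ (b (i+1) ++ (b (i+1+1)))) := by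
          rw [base, key, key, ← hp2]
        rw [hc, hbi, h13, hx2] at e
        exact (leaf hg _ e.symm (by decide)).elim
    · -- last letter 3
      have hm2 := hb (i+1+1) (by omega)
      simp only [List.mem_cons, List.not_mem_nil, or_false] at hm2
      rcases hm2 with hx2|hx2|hx2|hx2|hx2
      · -- 12
        have e : factorAtN t (p i - 1) (1 + ((b (i)).length + ((b (i+1)).length + ((b (i+1+1)).length)))) = t (p i - 1) :: (b (i) ++ (b (i+1) ++ (b (i+1+1)))) := by
          rw [base, key, key, ← hp2]
        rw [hc, hbi, h13, hx2] at e
        exact (leaf hg _ e.symm (by decide)).elim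
      · -- 123
        have e : factorAtN t (p i - 1) (1 + ((b (i)).length + ((b (i+1)).length + ((b (i+1+1)).length)))) = t (p i - 1) :: (b (i) ++ (b (i+1) ++ (b (i+1+1)))) := by
          rw [base, key, key, ← hp2]
        rw [hc, hbi, h13, hx2] at e
        exact (leaf hg _ e.symm (by decide)).elim
      · -- 1232
        have e : factorAtN t (p i - 1) (1 + ((b (i)).length + ((b (i+1)).length + ((b (i+1+1)).length)))) = t (p i - 1) :: (b (i) ++ (b (i+1) ++ (b (i+1+1)))) := by
          rw [base, key, key, ← hp2]
        rw [hc, hbi, h13, hx2] at e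
        exact (leaf hg _ e.symm (by decide)).elim
      · -- 13
        have e : factorAtN t (p i - 1) (1 + ((b (i)).length + ((b (i+1)).length + ((b (i+1+1)).length)))) = t (p i - 1) :: (b (i) ++ (b (i+1) ++ (b (i+1+1)))) := by
          rw [base, key, key, ← hp2]
        rw [hc, hbi, h13, hx2] at e
        exact (leaf hg _ e.symm (by decide)).elim
      · -- 1323
        have e : factorAtN t (p i - 1) (1 + ((b (i)).length + ((b (i+1)).length + ((b (i+1+1)).length)))) = t (p i - 1) :: (b (i) ++ (b (i+1) ++ (b (i+1+1)))) := by
          rw [base, key, key, ← hp2]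
        rw [hc, hbi, h13, hx2] at e
        exact (leaf hg _ e.symm (by decide)).elim
  · -- b i = 1232
    rcases hlast with hc|hc
    · -- last letter 2
      have hm2 := hb (i+1+1) (by omega)
      simp only [List.mem_cons, List.not_mem_nil, or_false] at hm2
      rcases hm2 with hx2|hx2|hx2|hx2|hx2
      · -- 12
        have hm3 := hb (i+1+1+1) (by omega)
        simp only [List.mem_cons, List.not_mem_nil, or_false] at hm3
        rcases hm3 with hx3|hx3|hx3|hx3|hx3
        · -- 12
          have e : factorAtN t (p i - 1) (1 + ((b (i)).length + ((b (i+1)).length + ((b (i+1+1)).length + ((b (i+1+1+1)).length))))) = t (p i - 1) :: (b (i) ++ (b (i+1) ++ (b (i+1+1) ++ (b (i+1+1+1))))) := by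
            rw [base, key, key, key, ← hp2]
          rw [hc, hbi, h13, hx2, hx3] at e
          exact (leaf hg _ e.symm (by decide)).elim
        · -- 123
          have e : factorAtN t (p i - 1) (1 + ((b (i)).length + ((b (i+1)).length + ((b (i+1+1)).length + ((b (i+1+1+1)).length))))) = t (p i - 1) :: (b (i) ++ (b (i+1) ++ (b (i+1+1) ++ (b (i+1+1+1))))) := by
            rw [base, key, key, key, ← hp2]
          rw [hc, hbi, h13, hx2, hx3] at e
          exact (leaf hg _ e.symm (by decide)).elim
        · -- 1232
          have e : factorAtN t (p i - 1) (1 + ((b (i)).length + ((b (i+1)).length + ((b (i+1+1)).length + ((b (i+1+1+1)).length))))) = t (p i - 1) :: (b (i) ++ (b (i+1) ++ (b (i+1+1) ++ (b (i+1+1+1))))) := by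
            rw [base, key, key, key, ← hp2]
          rw [hc, hbi, h13, hx2, hx3] at e
          exact (leaf hg _ e.symm (by decide)).elim
        · -- 13
          have hm4 := hb (i+1+1+1+1) (by omega)
          simp only [List.mem_cons, List.not_mem_nil, or_false] at hm4
          rcases hm4 with hx4|hx4|hx4|hx4|hx4
          · -- 12
            have e : factorAtN t (p i - 1) (1 + ((b (i)).length + ((b (i+1)).length + ((b (i+1+1)).length + ((b (i+1+1+1)).length + ((b (i+1+1+1+1)).length)))))) = t (p i - 1) :: (b (i) ++ (b (i+1) ++ (b (i+1+1) ++ (b (i+1+1+1) ++ (b (i+1+1+1+1)))))) := by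
              rw [base, key, key, key, key, ← hp2]
            rw [hc, hbi, h13, hx2, hx3, hx4] at e
            exact (leaf hg _ e.symm (by decide)).elim
          · -- 123
            have e : factorAtN t (p i - 1) (1 + ((b (i)).length + ((b (i+1)).length + ((b (i+1+1)).length + ((b (i+1+1+1)).length + ((b (i+1+1+1+1)).length)))))) = t (p i - 1) :: (b (i) ++ (b (i+1) ++ (b (i+1+1) ++ (b (i+1+1+1) ++ (b (i+1+1+1+1)))))) := by
              rw [base, key, key, key, key, ← hp2]
            rw [hc, hbi, h13, hx2, hx3, hx4] at e
            exact (leaf hg _ e.symm (by decide)).elim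
          · -- 1232
            have e : factorAtN t (p i - 1) (1 + ((b (i)).length + ((b (i+1)).length + ((b (i+1+1)).length + ((b (i+1+1+1)).length + ((b (i+1+1+1+1)).length)))))) = t (p i - 1) :: (b (i) ++ (b (i+1) ++ (b (i+1+1) ++ (b (i+1+1+1) ++ (b (i+1+1+1+1)))))) := by
              rw [base, key, key, key, key, ← hp2]
            rw [hc, hbi, h13, hx2, hx3, hx4] at e
            exact (leaf hg _ e.symm (by decide)).elim
          · -- 13
            have e : factorAtN t (p i - 1) (1 + ((b (i)).length + ((b (i+1)).length + ((b (i+1+1)).length + ((b (i+1+1+1)).length + ((b (i+1+1+1+1)).length)))))) = t (p i - 1) :: (b (i) ++ (b (i+1) ++ (b (i+1+1) ++ (b (i+1+1+1) ++ (b (i+1+1+1+1)))))) := by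
              rw [base, key, key, key, key, ← hp2]
            rw [hc, hbi, h13, hx2, hx3, hx4] at e
            exact (leaf hg _ e.symm (by decide)).elim
          · -- 1323
            have e : factorAtN t (p i - 1) (1 + ((b (i)).length + ((b (i+1)).length + ((b (i+1+1)).length + ((b (i+1+1+1)).length + ((b (i+1+1+1+1)).length)))))) = t (p i - 1) :: (b (i) ++ (b (i+1) ++ (b (i+1+1) ++ (b (i+1+1+1) ++ (b (i+1+1+1+1)))))) := by
              rw [base, key, key, key, key, ← hp2]
            rw [hc, hbi, h13, hx2, hx3, hx4] at e
            exact (leaf hg _ e.symm (by decide)).elim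
        · -- 1323
          have hm4 := hb (i+1+1+1+1) (by omega)
          simp only [List.mem_cons, List.not_mem_nil, or_false] at hm4
          rcases hm4 with hx4|hx4|hx4|hx4|hx4
          · -- 12
            have e : factorAtN t (p i - 1) (1 + ((b (i)).length + ((b (i+1)).length + ((b (i+1+1)).length + ((b (i+1+1+1)).length + ((b (i+1+1+1+1)).length)))))) = t (p i - 1) :: (b (i) ++ (b (i+1) ++ (b (i+1+1) ++ (b (i+1+1+1) ++ (b (i+1+1+1+1)))))) := by
              rw [base, key, key, key, key, ← hp2]
            rw [hc, hbi, h13, hx2, hx3, hx4] at e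
            exact (leaf hg _ e.symm (by decide)).elim
          · -- 123
            have e : factorAtN t (p i - 1) (1 + ((b (i)).length + ((b (i+1)).length + ((b (i+1+1)).length + ((b (i+1+1+1)).length + ((b (i+1+1+1+1)).length)))))) = t (p i - 1) :: (b (i) ++ (b (i+1) ++ (b (i+1+1) ++ (b (i+1+1+1) ++ (b (i+1+1+1+1)))))) := by
              rw [base, key, key, key, key, ← hp2]
            rw [hc, hbi, h13, hx2, hx3, hx4] at e
            exact (leaf hg _ e.symm (by decide)).elim
          · -- 1232
            have e : factorAtN t (p i - 1) (1 + ((b (i)).length + ((b (i+1)).length + ((b (i+1+1)).length + ((b (i+1+1+1)).length + ((b (i+1+1+1+1)).length)))))) = t (p i - 1) :: (b (i) ++ (b (i+1) ++ (b (i+1+1) ++ (b (i+1+1+1) ++ (b (i+1+1+1+1)))))) := by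
              rw [base, key, key, key, key, ← hp2]
            rw [hc, hbi, h13, hx2, hx3, hx4] at e
            exact (leaf hg _ e.symm (by decide)).elim
          · -- 13
            have hm5 := hb (i+1+1+1+1+1) (by omega)
            simp only [List.mem_cons, List.not_mem_nil, or_false] at hm5
            rcases hm5 with hx5|hx5|hx5|hx5|hx5
            · -- 12
              have e : factorAtN t (p i - 1) (1 + ((b (i)).length + ((b (i+1)).length + ((b (i+1+1)).length + ((b (i+1+1+1)).length + ((b (i+1+1+1+1)).length + ((b (i+1+1+1+1+1)).length))))))) = t (p i - 1) :: (b (i) ++ (b (i+1) ++ (b (i+1+1) ++ (b (i+1+1+1) ++ (b (i+1+1+1+1) ++ (b (i+1+1+1+1+1))))))) := by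
                rw [base, key, key, key, key, key, ← hp2]
              rw [hc, hbi, h13, hx2, hx3, hx4, hx5] at e
              exact (leaf hg _ e.symm (by decide)).elim
            · -- 123
              have e : factorAtN t (p i - 1) (1 + ((b (i)).length + ((b (i+1)).length + ((b (i+1+1)).length + ((b (i+1+1+1)).length + ((b (i+1+1+1+1)).length + ((b (i+1+1+1+1+1)).length))))))) = t (p i - 1) :: (b (i) ++ (b (i+1) ++ (b (i+1+1) ++ (b (i+1+1+1) ++ (b (i+1+1+1+1) ++ (b (i+1+1+1+1+1))))))) := by
                rw [base, key, key, key, key, key, ← hp2]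
              rw [hc, hbi, h13, hx2, hx3, hx4, hx5] at e
              exact (leaf hg _ e.symm (by decide)).elim
            · -- 1232
              have e : factorAtN t (p i - 1) (1 + ((b (i)).length + ((b (i+1)).length + ((b (i+1+1)).length + ((b (i+1+1+1)).length + ((b (i+1+1+1+1)).length + ((b (i+1+1+1+1+1)).length))))))) = t (p i - 1) :: (b (i) ++ (b (i+1) ++ (b (i+1+1) ++ (b (i+1+1+1) ++ (b (i+1+1+1+1) ++ (b (i+1+1+1+1+1))))))) := by
                rw [base, key, key, key, key, key, ← hp2]
              rw [hc, hbi, h13, hx2, hx3, hx4, hx5] at e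
              exact (leaf hg _ e.symm (by decide)).elim
            · -- 13
              have e : factorAtN t (p i - 1) (1 + ((b (i)).length + ((b (i+1)).length + ((b (i+1+1)).length + ((b (i+1+1+1)).length + ((b (i+1+1+1+1)).length + ((b (i+1+1+1+1+1)).length))))))) = t (p i - 1) :: (b (i) ++ (b (i+1) ++ (b (i+1+1) ++ (b (i+1+1+1) ++ (b (i+1+1+1+1) ++ (b (i+1+1+1+1+1))))))) := by
                rw [base, key, key, key, key, key, ← hp2]
              rw [hc, hbi, h13, hx2, hx3, hx4, hx5] at e
              exact (leaf hg _ e.symm (by decide)).elim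
            · -- 1323
              have e : factorAtN t (p i - 1) (1 + ((b (i)).length + ((b (i+1)).length + ((b (i+1+1)).length + ((b (i+1+1+1)).length + ((b (i+1+1+1+1)).length + ((b (i+1+1+1+1+1)).length))))))) = t (p i - 1) :: (b (i) ++ (b (i+1) ++ (b (i+1+1) ++ (b (i+1+1+1) ++ (b (i+1+1+1+1) ++ (b (i+1+1+1+1+1))))))) := by
                rw [base, key, key, key, key, key, ← hp2]
              rw [hc, hbi, h13, hx2, hx3, hx4, hx5] at e
              exact (leaf hg _ e.symm (by decide)).elim
          · -- 1323
            have e : factorAtN t (p i - 1) (1 + ((b (i)).length + ((b (i+1)).length + ((b (i+1+1)).length + ((b (i+1+1+1)).length + ((b (i+1+1+1+1)).length)))))) = t (p i - 1) :: (b (i) ++ (b (i+1) ++ (b (i+1+1) ++ (b (i+1+1+1) ++ (b (i+1+1+1+1)))))) := by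
              rw [base, key, key, key, key, ← hp2]
            rw [hc, hbi, h13, hx2, hx3, hx4] at e
            exact (leaf hg _ e.symm (by decide)).elim
      · -- 123
        have e : factorAtN t (p i - 1) (1 + ((b (i)).length + ((b (i+1)).length + ((b (i+1+1)).length)))) = t (p i - 1) :: (b (i) ++ (b (i+1) ++ (b (i+1+1)))) := by
          rw [base, key, key, ← hp2]
        rw [hc, hbi, h13, hx2] at e
        exact (leaf hg _ e.symm (by decide)).elim
      · -- 1232
        have e : factorAtN t (p i - 1) (1 + ((b (i)).length + ((b (i+1)).length + ((b (i+1+1)).length)))) = t (p i - 1) :: (b (i) ++ (b (i+1) ++ (b (i+1+1)))) := by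
          rw [base, key, key, ← hp2]
        rw [hc, hbi, h13, hx2] at e
        exact (leaf hg _ e.symm (by decide)).elim
      · -- 13
        have e : factorAtN t (p i - 1) (1 + ((b (i)).length + ((b (i+1)).length + ((b (i+1+1)).length)))) = t (p i - 1) :: (b (i) ++ (b (i+1) ++ (b (i+1+1)))) := by
          rw [base, key, key, ← hp2]
        rw [hc, hbi, h13, hx2] at e
        exact (leaf hg _ e.symm (by decide)).elim
      · -- 1323
        have e : factorAtN t (p i - 1) (1 + ((b (i)).length + ((b (i+1)).length + ((b (i+1+1)).length)))) = t (p i - 1) :: (b (i) ++ (b (i+1) ++ (b (i+1+1)))) := by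
          rw [base, key, key, ← hp2]
        rw [hc, hbi, h13, hx2] at e
        exact (leaf hg _ e.symm (by decide)).elim
    · -- last letter 3
      have e : factorAtN t (p i - 1) (1 + ((b (i)).length + ((b (i+1)).length))) = t (p i - 1) :: (b (i) ++ (b (i+1))) := by
        rw [base, key, ← hp2]
      rw [hc, hbi, h13] at e
      exact (leaf hg _ e.symm (by decide)).elim
  · -- b i = 13
    rcases hlast with hc|hc
    · -- last letter 2
      have e : factorAtN t (p i - 1) (1 + ((b (i)).length + ((b (i+1)).length))) = t (p i - 1) :: (b (i) ++ (b (i+1))) := by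
        rw [base, key, ← hp2]
      rw [hc, hbi, h13] at e
      exact (leaf hg _ e.symm (by decide)).elim
    · -- last letter 3
      have e : factorAtN t (p i - 1) (1 + ((b (i)).length + ((b (i+1)).length))) = t (p i - 1) :: (b (i) ++ (b (i+1))) := by
        rw [base, key, ← hp2]
      rw [hc, hbi, h13] at e
      exact (leaf hg _ e.symm (by decide)).elim
  · -- b i = 1323
    rcases hlast with hc|hc
    · -- last letter 2
      have hm2 := hb (i+1+1) (by omega)
      simp only [List.mem_cons, List.not_mem_nil, or_false] at hm2
      rcases hm2 with hx2|hx2|hx2|hx2|hx2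
      · -- 12
        have e : factorAtN t (p i - 1) (1 + ((b (i)).length + ((b (i+1)).length + ((b (i+1+1)).length)))) = t (p i - 1) :: (b (i) ++ (b (i+1) ++ (b (i+1+1)))) := by
          rw [base, key, key, ← hp2]
        rw [hc, hbi, h13, hx2] at e
        exact (leaf hg _ e.symm (by decide)).elim
      · -- 123
        have e : factorAtN t (p i - 1) (1 + ((b (i)).length + ((b (i+1)).length + ((b (i+1+1)).length)))) = t (p i - 1) :: (b (i) ++ (b (i+1) ++ (b (i+1+1)))) := by
          rw [base, key, key, ← hp2]
        rw [hc, hbi, h13, hx2] at e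
        exact (leaf hg _ e.symm (by decide)).elim
      · -- 1232
        have e : factorAtN t (p i - 1) (1 + ((b (i)).length + ((b (i+1)).length + ((b (i+1+1)).length)))) = t (p i - 1) :: (b (i) ++ (b (i+1) ++ (b (i+1+1)))) := by
          rw [base, key, key, ← hp2]
        rw [hc, hbi, h13, hx2] at e
        exact (leaf hg _ e.symm (by decide)).elim
      · -- 13
        have e : factorAtN t (p i - 1) (1 + ((b (i)).length + ((b (i+1)).length + ((b (i+1+1)).length)))) = t (p i - 1) :: (b (i) ++ (b (i+1) ++ (b (i+1+1)))) := by
          rw [base, key, key, ← hp2]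
        rw [hc, hbi, h13, hx2] at e
        exact (leaf hg _ e.symm (by decide)).elim
      · -- 1323
        have e : factorAtN t (p i - 1) (1 + ((b (i)).length + ((b (i+1)).length + ((b (i+1+1)).length)))) = t (p i - 1) :: (b (i) ++ (b (i+1) ++ (b (i+1+1)))) := by
          rw [base, key, key, ← hp2]
        rw [hc, hbi, h13, hx2] at e
        exact (leaf hg _ e.symm (by decide)).elim
    · -- last letter 3
      have hm2 := hb (i+1+1) (by omega)
      simp only [List.mem_cons, List.not_mem_nil, or_false] at hm2
      rcases hm2 with hx2|hx2|hx2|hx2|hx2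
      · -- 12
        have e : factorAtN t (p i - 1) (1 + ((b (i)).length + ((b (i+1)).length + ((b (i+1+1)).length)))) = t (p i - 1) :: (b (i) ++ (b (i+1) ++ (b (i+1+1)))) := by
          rw [base, key, key, ← hp2]
        rw [hc, hbi, h13, hx2] at e
        exact (leaf hg _ e.symm (by decide)).elim
      · -- 123
        have e : factorAtN t (p i - 1) (1 + ((b (i)).length + ((b (i+1)).length + ((b (i+1+1)).length)))) = t (p i - 1) :: (b (i) ++ (b (i+1) ++ (b (i+1+1)))) := by
          rw [base, key, key, ← hp2]
        rw [hc, hbi, h13, hx2] at e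
        exact (leaf hg _ e.symm (by decide)).elim
      · -- 1232
        have e : factorAtN t (p i - 1) (1 + ((b (i)).length + ((b (i+1)).length + ((b (i+1+1)).length)))) = t (p i - 1) :: (b (i) ++ (b (i+1) ++ (b (i+1+1)))) := by
          rw [base, key, key, ← hp2]
        rw [hc, hbi, h13, hx2] at e
        exact (leaf hg _ e.symm (by decide)).elim
      · -- 13
        have e : factorAtN t (p i - 1) (1 + ((b (i)).length + ((b (i+1)).length + ((b (i+1+1)).length)))) = t (p i - 1) :: (b (i) ++ (b (i+1) ++ (b (i+1+1)))) := by
          rw [base, key, key, ← hp2]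
        rw [hc, hbi, h13, hx2] at e
        exact (leaf hg _ e.symm (by decide)).elim
      · -- 1323
        have e : factorAtN t (p i - 1) (1 + ((b (i)).length + ((b (i+1)).length + ((b (i+1+1)).length)))) = t (p i - 1) :: (b (i) ++ (b (i+1) ++ (b (i+1+1)))) := by
          rw [base, key, key, ← hp2]
        rw [hc, hbi, h13, hx2] at e
        exact (leaf hg _ e.symm (by decide)).elim
end

section
/- Let v be a ℤ-word over T = {a,b,c,d} such that the ℤ-word f(v) over S = {1,2,3} is good. Then none of ac, aba, bd, cb, da, dc is a factor of v. -/
section Helpers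

private lemma coeList_aux (l : List ℕ) : (l.flatMap fun a => [(a:ℤ)]) = l.map (↑·) := by
  induction l with
  | nil => rfl
  | cons x xs ih => simp_all

lemma factorAtZ_eq {α : Type*} (w : ℤ → α) (i : ℤ) (n : ℕ) :
    factorAtZ w i n = (List.range n).map (fun k : ℕ => w (i + (k:ℤ))) := by
  rw [factorAtZ]
  simp only [List.pure_def, List.bind_eq_flatMap, coeList_aux, List.map_map]
  induction List.range n with
  | nil => rfl
  | cons x xs ih => simp_all

lemma factorAtZ_length {α : Type*} (w : ℤ → α) (i : ℤ) (n : ℕ) :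
    (factorAtZ w i n).length = n := by
  rw [factorAtZ_eq, List.length_map, List.length_range]

lemma factorAtZ_append {α : Type*} (w : ℤ → α) (j : ℤ) (m n : ℕ) :
    factorAtZ w j (m + n) = factorAtZ w j m ++ factorAtZ w (j + m) n := by
  simp only [factorAtZ_eq, List.range_add, List.map_append, List.map_map]
  congr 1
  apply List.map_congr_left
  intro k _
  simp only [Function.comp_apply]
  congr 1
  push_cast
  ring

lemma factor_mid {α : Type*} (w : ℤ → α) (A B C : List α)
    (h : IsFactorZ (A ++ B ++ C) w) : IsFactorZ B w := by
  obtain ⟨j, hj⟩ := h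
  have hlen : (A ++ B ++ C).length = A.length + (B.length + C.length) := by
    rw [List.length_append, List.length_append, Nat.add_assoc]
  rw [hlen, factorAtZ_append, factorAtZ_append] at hj
  rw [List.append_assoc] at hj
  have h1 := List.append_inj hj (by rw [factorAtZ_length])
  have h2 := List.append_inj h1.2 (by rw [factorAtZ_length])
  exact ⟨j + A.length, h2.1⟩

private lemma four_cases : ∀ t : Fin 4, t = 0 ∨ t = 1 ∨ t = 2 ∨ t = 3 := by decide


end Helpers

/-- If `v` is a ℤ-word over `T = {a,b,c,d}` whose image `f(v)` is a good ℤ-word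
over `S`, then none of `ac, aba, bd, cb, da, dc` is a factor of `v`. -/
theorem stmt_14 (v : ℤ → Fin 4) (w : ℤ → Fin 3)
    (hw : ZConcat w (fun i => fL (v i))) (hg : GoodZ w) :
    ¬ IsFactorZ [0,2] v ∧ ¬ IsFactorZ [0,1,0] v ∧ ¬ IsFactorZ [1,3] v ∧
    ¬ IsFactorZ [2,1] v ∧ ¬ IsFactorZ [3,0] v ∧ ¬ IsFactorZ [3,2] v := by
  obtain ⟨hsf, hfg⟩ := hg
  obtain ⟨p, hp, hb⟩ := hw
  have hb' : ∀ i, fL (v i) = factorAtZ w (p i) (fL (v i)).length := hb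
  have hp' : ∀ i, p (i + 1) = p i + ((fL (v i)).length : ℤ) := hp
  have cat3 : ∀ i : ℤ,
      IsFactorZ (fL (v i) ++ (fL (v (i+1)) ++ fL (v (i+2)))) w := by
    intro i
    refine ⟨p i, ?_⟩
    rw [List.length_append, List.length_append, factorAtZ_append, factorAtZ_append,
      show p i + ((fL (v i)).length : ℤ) = p (i+1) from (hp' i).symm,
      show p (i+1) + ((fL (v (i+1))).length : ℤ) = p (i+2) by
        rw [show (i:ℤ)+2 = i+1+1 by ring, hp' (i+1)],
      ← hb' i, ← hb' (i+1), ← hb' (i+2)]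
  have cat2 : ∀ i : ℤ, IsFactorZ (fL (v i) ++ fL (v (i+1))) w := by
    intro i
    refine ⟨p i, ?_⟩
    rw [List.length_append, factorAtZ_append,
      show p i + ((fL (v i)).length : ℤ) = p (i+1) from (hp' i).symm,
      ← hb' i, ← hb' (i+1)]
  refine ⟨?_, ?_, ?_, ?_, ?_, ?_⟩
  · -- ac
    rintro ⟨i, hi⟩
    simp [factorAtZ_eq, List.range_succ] at hi
    obtain ⟨h1, h2⟩ := hi
    have c := cat2 i; rw [← h1, ← h2] at c
    have c' : IsFactorZ ([0,1] ++ ([0,2] ++ [0,2]) ++ [1,2]) w := by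
      rw [show ([0,1] ++ ([0,2] ++ [0,2]) ++ [1,2] : List (Fin 3)) = fL 0 ++ fL 2 by decide]
      exact c
    exact hsf [0,2] (by decide) (factor_mid w _ _ _ c')
  · -- aba
    rintro ⟨i, hi⟩
    simp [factorAtZ_eq, List.range_succ] at hi
    obtain ⟨h1, h2, h3⟩ := hi
    have c := cat3 i; rw [← h1, ← h2, ← h3] at c
    have c' : IsFactorZ ([0,1,0] ++ ([2,0,1] ++ [2,0,1]) ++ [0,2]) w := by
      rw [show ([0,1,0] ++ ([2,0,1] ++ [2,0,1]) ++ [0,2] : List (Fin 3))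
          = fL 0 ++ (fL 1 ++ fL 0) by decide]
      exact c
    exact hsf [2,0,1] (by decide) (factor_mid w _ _ _ c')
  · -- bd
    rintro ⟨i, hi⟩
    simp [factorAtZ_eq, List.range_succ] at hi
    obtain ⟨h1, h2⟩ := hi
    have c := cat2 i; rw [← h1, ← h2] at c
    have c' : IsFactorZ (([] : List (Fin 3)) ++ ([0,1,2] ++ [0,1,2]) ++ [1]) w := by
      rw [show (([] : List (Fin 3)) ++ ([0,1,2] ++ [0,1,2]) ++ [1] : List (Fin 3))
          = fL 1 ++ fL 3 by decide]
      exact c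
    exact hsf [0,1,2] (by decide) (factor_mid w _ _ _ c')
  · -- cb
    rintro ⟨i, hi⟩
    simp [factorAtZ_eq, List.range_succ] at hi
    obtain ⟨h1, h2⟩ := hi
    have c := cat3 i; rw [← h1, ← h2] at c
    rcases four_cases (v (i+2)) with hx|hx|hx|hx <;> rw [hx] at c
    · have c' : IsFactorZ ([0,2] ++ ([1,2,0] ++ [1,2,0]) ++ [1,0,2]) w := by
        rw [show ([0,2] ++ ([1,2,0] ++ [1,2,0]) ++ [1,0,2] : List (Fin 3))
            = fL 2 ++ (fL 1 ++ fL 0) by decide]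
        exact c
      exact hsf [1,2,0] (by decide) (factor_mid w _ _ _ c')
    · have c' : IsFactorZ ([0,2] ++ ([1,2,0] ++ [1,2,0]) ++ [1,2]) w := by
        rw [show ([0,2] ++ ([1,2,0] ++ [1,2,0]) ++ [1,2] : List (Fin 3))
            = fL 2 ++ (fL 1 ++ fL 1) by decide]
        exact c
      exact hsf [1,2,0] (by decide) (factor_mid w _ _ _ c')
    · have c' : IsFactorZ ([0,2] ++ ([1,2,0] ++ [1,2,0]) ++ [2,1,2]) w := by
        rw [show ([0,2] ++ ([1,2,0] ++ [1,2,0]) ++ [2,1,2] : List (Fin 3))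
            = fL 2 ++ (fL 1 ++ fL 2) by decide]
        exact c
      exact hsf [1,2,0] (by decide) (factor_mid w _ _ _ c')
    · have c' : IsFactorZ ([0,2] ++ ([1,2,0] ++ [1,2,0]) ++ [1,2,1]) w := by
        rw [show ([0,2] ++ ([1,2,0] ++ [1,2,0]) ++ [1,2,1] : List (Fin 3))
            = fL 2 ++ (fL 1 ++ fL 3) by decide]
        exact c
      exact hsf [1,2,0] (by decide) (factor_mid w _ _ _ c')
  · -- da
    rintro ⟨i, hi⟩
    simp [factorAtZ_eq, List.range_succ] at hi
    obtain ⟨h1, h2⟩ := hi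
    have c := cat2 i; rw [← h1, ← h2] at c
    have c' : IsFactorZ ([0,1,2] ++ ([1,0] ++ [1,0]) ++ [2]) w := by
      rw [show ([0,1,2] ++ ([1,0] ++ [1,0]) ++ [2] : List (Fin 3)) = fL 3 ++ fL 0 by decide]
      exact c
    exact hsf [1,0] (by decide) (factor_mid w _ _ _ c')
  · -- dc
    rintro ⟨i, hi⟩
    simp [factorAtZ_eq, List.range_succ] at hi
    obtain ⟨h1, h2⟩ := hi
    have c := cat3 (i-1)
    rw [show i - (1:ℤ) + 1 = i by ring, show i - (1:ℤ) + 2 = i + 1 by ring,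
      ← h1, ← h2] at c
    rcases four_cases (v (i-1)) with hx|hx|hx|hx <;> rw [hx] at c
    · have c' : IsFactorZ ([0,1,0] ++ [2,0,1,2,1,0,2] ++ [1,2]) w := by
        rw [show ([0,1,0] ++ [2,0,1,2,1,0,2] ++ [1,2] : List (Fin 3))
            = fL 0 ++ (fL 3 ++ fL 2) by decide]
        exact c
      exact hfg [2,0,1,2,1,0,2] (by decide) (factor_mid w _ _ _ c')
    · have c' : IsFactorZ ([0,1] ++ [2,0,1,2,1,0,2] ++ [1,2]) w := by
        rw [show ([0,1] ++ [2,0,1,2,1,0,2] ++ [1,2] : List (Fin 3))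
            = fL 1 ++ (fL 3 ++ fL 2) by decide]
        exact c
      exact hfg [2,0,1,2,1,0,2] (by decide) (factor_mid w _ _ _ c')
    · have c' : IsFactorZ ([0,2,1] ++ [2,0,1,2,1,0,2] ++ [1,2]) w := by
        rw [show ([0,2,1] ++ [2,0,1,2,1,0,2] ++ [1,2] : List (Fin 3))
            = fL 2 ++ (fL 3 ++ fL 2) by decide]
        exact c
      exact hfg [2,0,1,2,1,0,2] (by decide) (factor_mid w _ _ _ c')
    · have c' : IsFactorZ (([] : List (Fin 3)) ++ ([0,1,2,1] ++ [0,1,2,1]) ++ [0,2,1,2]) w := by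
        rw [show (([] : List (Fin 3)) ++ ([0,1,2,1] ++ [0,1,2,1]) ++ [0,2,1,2] : List (Fin 3))
            = fL 3 ++ (fL 3 ++ fL 2) by decide]
        exact c
      exact hsf [0,1,2,1] (by decide) (factor_mid w _ _ _ c')
end
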